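/- arXiv:2312.00243 — 7 statements merged into one kernel-verified Lean document; each statement's English description precedes it below -/
import Mathlib

section
/- The reserve-price first-price equilibrium strategy β_QL satisfies interim incentive compatibility for payoff-maximizing bidders with uniform priors: for all v, w ∈ [r, 1], w^(N−1)·(v − β_QL(w)) ≤ v^(N−1)·(v − β_QL(v)). That is, the interim utility w^(N−1)·(v − β_QL(w)) of a bidder with value v who mimics type w (winning with probability w^(N−1) and paying β_QL(w)) is maximized at w = v. -/
/-- The reserve-price first-price equilibrium strategy for payoff-maximizing
(quasi-linear) bidders with i.i.d. uniform `[0,1]` values, `N` bidders and reserve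
price `r`: `β_QL(v) = ((N-1)/N)·v + (1/N)·r^N / v^(N-1)`. -/
noncomputable def betaQL (N : ℕ) (r v : ℝ) : ℝ :=
  ((N : ℝ) - 1) / N * v + 1 / N * (r ^ N / v ^ (N - 1))

/-- Tangent-line inequality for `x ^ N`: for nonnegative reals,
`N·w^(N-1)·(v−w) ≤ v^N − w^N`. -/
lemma pow_tangent_line (N : ℕ) {v w : ℝ} (hv : 0 ≤ v) (hw : 0 ≤ w) :
    (N : ℝ) * w ^ (N - 1) * (v - w) ≤ v ^ N - w ^ N := by
  rw [← geom_sum₂_mul]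
  have hsum : ∀ h : w ≤ v,
      (N : ℝ) * w ^ (N - 1) ≤ ∑ i ∈ Finset.range N, v ^ i * w ^ (N - 1 - i) := by
    intro h
    calc (N : ℝ) * w ^ (N - 1) = ∑ _i ∈ Finset.range N, w ^ (N - 1) := by
          rw [Finset.sum_const, nsmul_eq_mul, Finset.card_range]
      _ ≤ _ := by
          apply Finset.sum_le_sum
          intro i hi
          have hi' : i < N := Finset.mem_range.mp hi
          have : w ^ (N - 1) = w ^ i * w ^ (N - 1 - i) := by
            rw [← pow_add]; congr 1; omega
          rw [this]
          exact mul_le_mul_of_nonneg_right (pow_le_pow_left₀ hw h i) (pow_nonneg hw _)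
  have hsum' : ∀ h : v ≤ w,
      (∑ i ∈ Finset.range N, v ^ i * w ^ (N - 1 - i)) ≤ (N : ℝ) * w ^ (N - 1) := by
    intro h
    calc (∑ i ∈ Finset.range N, v ^ i * w ^ (N - 1 - i))
        ≤ ∑ _i ∈ Finset.range N, w ^ (N - 1) := by
          apply Finset.sum_le_sum
          intro i hi
          have hi' : i < N := Finset.mem_range.mp hi
          have hrw : w ^ (N - 1) = w ^ i * w ^ (N - 1 - i) := by
            rw [← pow_add]; congr 1; omega
          rw [hrw]
          exact mul_le_mul_of_nonneg_right (pow_le_pow_left₀ hv h i) (pow_nonneg hw _)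
      _ = (N : ℝ) * w ^ (N - 1) := by
          rw [Finset.sum_const, nsmul_eq_mul, Finset.card_range]
  rcases le_total w v with h | h
  · exact mul_le_mul_of_nonneg_right (hsum h) (by linarith)
  · exact mul_le_mul_of_nonpos_right (hsum' h) (by linarith)

/-- Interim incentive compatibility of `β_QL` for payoff-maximizing bidders with
uniform priors: for all `v, w ∈ [r, 1]`, the interim utility
`w^(N-1)·(v − β_QL(w))` of a bidder with value `v` mimicking type `w` (winning with
probability `w^(N-1)` and paying `β_QL(w)`) is at most the truthful interim utility
`v^(N-1)·(v − β_QL(v))`. -/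
theorem betaQL_interim_ic
    (N : ℕ) (hN : 2 ≤ N) (r : ℝ) (hr0 : 0 < r) (hr1 : r ≤ 1) :
    ∀ v ∈ Set.Icc r 1, ∀ w ∈ Set.Icc r 1,
      w ^ (N - 1) * (v - betaQL N r w) ≤ v ^ (N - 1) * (v - betaQL N r v) := by
  obtain ⟨n, rfl⟩ : ∃ n, N = n + 1 := ⟨N - 1, by omega⟩
  intro v hv w hw
  have hv0 : 0 < v := lt_of_lt_of_le hr0 hv.1
  have hw0 : 0 < w := lt_of_lt_of_le hr0 hw.1
  have hvn : (0:ℝ) < v ^ n := pow_pos hv0 n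
  have hwn : (0:ℝ) < w ^ n := pow_pos hw0 n
  have hn1 : (0:ℝ) < (n:ℝ) + 1 := by positivity
  have key := pow_tangent_line (n + 1) hv0.le hw0.le
  simp only [Nat.add_sub_cancel, Nat.cast_add, Nat.cast_one, pow_succ] at key ⊢
  simp only [betaQL, Nat.add_sub_cancel, Nat.cast_add, Nat.cast_one, pow_succ]
  -- Interim utilities simplify:
  have e1 : w ^ n * (v - (((n:ℝ) + 1 - 1) / ((n:ℝ) + 1) * w +
      1 / ((n:ℝ) + 1) * (r ^ n * r / w ^ n))) =
      w ^ n * v - (n:ℝ) / ((n:ℝ) + 1) * (w ^ n * w) - 1 / ((n:ℝ) + 1) * (r ^ n * r) := by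
    field_simp
    ring
  have e2 : v ^ n * (v - (((n:ℝ) + 1 - 1) / ((n:ℝ) + 1) * v +
      1 / ((n:ℝ) + 1) * (r ^ n * r / v ^ n))) =
      v ^ n * v - (n:ℝ) / ((n:ℝ) + 1) * (v ^ n * v) - 1 / ((n:ℝ) + 1) * (r ^ n * r) := by
    field_simp
    ring
  rw [e1, e2, ← mul_le_mul_iff_right₀ hn1]
  field_simp
  ring_nf
  ring_nf at key
  nlinarith [key]
end

section
/- For two ROI-maximizing bidders with uniform priors and reserve price r, the strategy β(v) = v/(1 − log r + log v) solves the equilibrium initial value problem of the first-price auction: for every v with 0 < r ≤ v, the denominator satisfies 1 − log r + log v ≥ 1 > 0, β(r) = r, and β has derivative β(v)/v − β(v)²/v² at v, i.e., β satisfies the ODE β'(v) = (N−1)·(β(v)/v − β(v)²/v²) for N = 2. -/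
/-- The ROI equilibrium strategy of the first-price auction with `N = 2` bidders having
i.i.d. uniform `[0,1]` values and reserve price `r`: `β(v) = v / (1 − log r + log v)`. -/
noncomputable def betaROI2 (r v : ℝ) : ℝ :=
  v / (1 - Real.log r + Real.log v)

/-- For two ROI-maximizing bidders with uniform priors and reserve price `r`,
`β(v) = v/(1 − log r + log v)` solves the equilibrium initial value problem of the
first-price auction: for every `v ≥ r` the denominator satisfies
`1 − log r + log v ≥ 1 > 0`, `β(r) = r`, and `β` has derivative
`β(v)/v − β(v)²/v²` at `v`, i.e. `β` satisfies the ODE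
`β'(v) = (N−1)·(β(v)/v − β(v)²/v²)` for `N = 2`. -/
theorem betaROI2_solves_ivp
    (r : ℝ) (hr0 : 0 < r) (hr1 : r ≤ 1) :
    (∀ v : ℝ, r ≤ v →
      1 ≤ 1 - Real.log r + Real.log v ∧ 0 < 1 - Real.log r + Real.log v) ∧
    betaROI2 r r = r ∧
    ∀ v : ℝ, r ≤ v →
      HasDerivAt (betaROI2 r)
        (betaROI2 r v / v - (betaROI2 r v) ^ 2 / v ^ 2) v := by
  have hden : ∀ v : ℝ, r ≤ v → 1 ≤ 1 - Real.log r + Real.log v := by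
    intro v hv
    have := Real.log_le_log hr0 hv
    linarith
  refine ⟨fun v hv => ⟨hden v hv, lt_of_lt_of_le one_pos (hden v hv)⟩, ?_, ?_⟩
  · simp [betaROI2]
  · intro v hv
    have hv0 : 0 < v := lt_of_lt_of_le hr0 hv
    have hD : 1 ≤ 1 - Real.log r + Real.log v := hden v hv
    have hDne : (1 - Real.log r + Real.log v) ≠ 0 := by linarith
    have hderiv : HasDerivAt (betaROI2 r)
        ((1 * (1 - Real.log r + Real.log v) - v * (0 + v⁻¹)) /
          (1 - Real.log r + Real.log v) ^ 2) v := by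
      exact (hasDerivAt_id v).div
        ((hasDerivAt_const v (1 - Real.log r)).add (Real.hasDerivAt_log hv0.ne')) hDne
    convert hderiv using 1
    simp only [betaROI2]
    field_simp
    ring
end

section
/- For N ≥ 3 ROI-maximizing bidders with uniform priors and reserve price r, the strategy β(v) = (N−2)·v^(N−1)/((N−1)·v^(N−2) − r^(N−2)) solves the equilibrium initial value problem of the first-price auction: for every v with 0 < r ≤ v, the denominator satisfies (N−1)·v^(N−2) − r^(N−2) > 0, β(r) = r, and β has derivative (N−1)·(β(v)/v − β(v)²/v²) at v, i.e., β satisfies the ODE β'(v) = (N−1)·(β(v)/v − β(v)²/v²). -/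
/-- The ROI equilibrium strategy of the first-price auction with `N ≥ 3` bidders having
i.i.d. uniform `[0,1]` values and reserve price `r`:
`β(v) = (N−2)·v^(N−1) / ((N−1)·v^(N−2) − r^(N−2))`. -/
noncomputable def betaROIN (N : ℕ) (r v : ℝ) : ℝ :=
  ((N : ℝ) - 2) * v ^ (N - 1) / (((N : ℝ) - 1) * v ^ (N - 2) - r ^ (N - 2))

/-- For `N ≥ 3` ROI-maximizing bidders with uniform priors and reserve price `r`,
`β(v) = (N−2)·v^(N−1)/((N−1)·v^(N−2) − r^(N−2))` solves the equilibrium initial value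
problem of the first-price auction: for every `v ≥ r` the denominator satisfies
`(N−1)·v^(N−2) − r^(N−2) > 0`, `β(r) = r`, and `β` has derivative
`(N−1)·(β(v)/v − β(v)²/v²)` at `v`, i.e. `β` satisfies the ODE
`β'(v) = (N−1)·(β(v)/v − β(v)²/v²)`. -/
theorem betaROIN_solves_ivp
    (N : ℕ) (hN : 3 ≤ N) (r : ℝ) (hr0 : 0 < r) (hr1 : r ≤ 1) :
    (∀ v : ℝ, r ≤ v → 0 < ((N : ℝ) - 1) * v ^ (N - 2) - r ^ (N - 2)) ∧
    betaROIN N r r = r ∧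
    ∀ v : ℝ, r ≤ v →
      HasDerivAt (betaROIN N r)
        (((N : ℝ) - 1) *
          (betaROIN N r v / v - (betaROIN N r v) ^ 2 / v ^ 2)) v := by
  obtain ⟨k, rfl⟩ : ∃ k, N = k + 3 := ⟨N - 3, by omega⟩
  have hsub1 : k + 3 - 1 = k + 2 := by omega
  have hsub2 : k + 3 - 2 = k + 1 := by omega
  have hbeta : betaROIN (k + 3) r = fun v : ℝ =>
      ((k : ℝ) + 1) * v ^ (k + 2) / (((k : ℝ) + 2) * v ^ (k + 1) - r ^ (k + 1)) := by
    funext v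
    simp only [betaROIN, hsub1, hsub2]
    push_cast
    ring_nf
  have hden : ∀ v : ℝ, r ≤ v → 0 < ((k : ℝ) + 2) * v ^ (k + 1) - r ^ (k + 1) := by
    intro v hv
    have h1 : r ^ (k + 1) ≤ v ^ (k + 1) := pow_le_pow_left₀ hr0.le hv _
    have h2 : 0 < v ^ (k + 1) := pow_pos (lt_of_lt_of_le hr0 hv) _
    have hk : (0 : ℝ) ≤ (k : ℝ) := Nat.cast_nonneg k
    nlinarith
  refine ⟨?_, ?_, ?_⟩
  · intro v hv
    have := hden v hv
    simp only [hsub2]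
    push_cast
    linarith
  · have hD := hden r le_rfl
    rw [hbeta]
    show ((k:ℝ) + 1) * r ^ (k + 2) / (((k:ℝ) + 2) * r ^ (k + 1) - r ^ (k + 1)) = r
    rw [div_eq_iff hD.ne']
    ring
  · intro v hv
    have hv0 : 0 < v := lt_of_lt_of_le hr0 hv
    have hD := hden v hv
    have hDne : ((k : ℝ) + 2) * v ^ (k + 1) - r ^ (k + 1) ≠ 0 := ne_of_gt hD
    have hf : HasDerivAt (fun v : ℝ => ((k : ℝ) + 1) * v ^ (k + 2))
        (((k : ℝ) + 1) * (((k : ℝ) + 2) * v ^ (k + 1))) v := by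
      have h := (hasDerivAt_pow (k + 2) v).const_mul ((k : ℝ) + 1)
      refine h.congr_deriv ?_
      rw [show k + 2 - 1 = k + 1 from rfl]
      push_cast
      ring
    have hg : HasDerivAt (fun v : ℝ => ((k : ℝ) + 2) * v ^ (k + 1) - r ^ (k + 1))
        (((k : ℝ) + 2) * (((k : ℝ) + 1) * v ^ k)) v := by
      have h := ((hasDerivAt_pow (k + 1) v).const_mul ((k : ℝ) + 2)).sub_const (r ^ (k + 1))
      refine h.congr_deriv ?_
      rw [show k + 1 - 1 = k from rfl]
      push_cast
      ring
    have hdiv := hf.div hg hDne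
    rw [hbeta]
    refine hdiv.congr_deriv ?_
    simp only
    push_cast
    field_simp
    ring
end

section
/- The ROI equilibrium strategy β(v) = v/(1 − log r + log v) for N = 2 uniform bidders shades bids between the reserve price and the true value and is strictly increasing: for every v ∈ [r, 1] it holds that r ≤ β(v) ≤ v (so the equilibrium ROI (v − β(v))/β(v) is nonnegative), and β is strictly monotonically increasing on [r, 1]. -/
/-- The ROI equilibrium strategy `β(v) = v/(1 − log r + log v)` for `N = 2` uniform
bidders shades bids between the reserve price and the true value and is strictly
increasing: for every `v ∈ [r, 1]`, `r ≤ β(v) ≤ v` (so the equilibrium ROI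
`(v − β(v))/β(v)` is nonnegative), and `β` is strictly monotonically increasing on
`[r, 1]`. -/
theorem betaROI2_shading_and_strictMono
    (r : ℝ) (hr0 : 0 < r) (hr1 : r ≤ 1) :
    (∀ v ∈ Set.Icc r 1,
      r ≤ betaROI2 r v ∧ betaROI2 r v ≤ v ∧
        0 ≤ (v - betaROI2 r v) / betaROI2 r v) ∧
    StrictMonoOn (betaROI2 r) (Set.Icc r 1) := by
  have key : ∀ v ∈ Set.Icc r 1,
      r ≤ betaROI2 r v ∧ betaROI2 r v ≤ v := by
    intro v hv
    obtain ⟨hrv, hv1⟩ := hv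
    have hv0 : 0 < v := lt_of_lt_of_le hr0 hrv
    have hlog : Real.log r ≤ Real.log v := Real.log_le_log hr0 hrv
    have hL1 : (1 : ℝ) ≤ 1 - Real.log r + Real.log v := by linarith
    have hL0 : (0 : ℝ) < 1 - Real.log r + Real.log v := by linarith
    constructor
    · rw [betaROI2, le_div_iff₀ hL0]
      have hvr : 0 < v / r := div_pos hv0 hr0
      have h1 : Real.log (v / r) ≤ v / r - 1 := Real.log_le_sub_one_of_pos hvr
      rw [Real.log_div (ne_of_gt hv0) (ne_of_gt hr0)] at h1
      have h2 : r * (v / r) = v := by field_simp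
      nlinarith
    · rw [betaROI2]
      exact div_le_self hv0.le hL1
  refine ⟨fun v hv => ⟨(key v hv).1, (key v hv).2, ?_⟩, ?_⟩
  · have h1 := (key v hv).1
    have h2 := (key v hv).2
    exact div_nonneg (by linarith) (by linarith)
  · apply strictMonoOn_of_deriv_pos (convex_Icc r 1)
    · apply ContinuousOn.div continuousOn_id
      · exact Continuous.continuousOn (by continuity) |>.add
          (Real.continuousOn_log.mono (by
            intro x hx
            exact ne_of_gt (lt_of_lt_of_le hr0 hx.1)))
      · intro x hx
        have hlog : Real.log r ≤ Real.log x := Real.log_le_log hr0 hx.1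
        intro h; linarith [h]
    · intro x hx
      rw [interior_Icc] at hx
      obtain ⟨hrx, hx1⟩ := hx
      have hx0 : 0 < x := lt_trans hr0 hrx
      have hlog : Real.log r < Real.log x := Real.log_lt_log hr0 hrx
      have hL1 : (1 : ℝ) < 1 - Real.log r + Real.log x := by linarith
      have hL0 : (1 - Real.log r + Real.log x) ≠ 0 := by intro h; linarith
      have hd : HasDerivAt (betaROI2 r)
          ((1 * (1 - Real.log r + Real.log x) - x * (0 + x⁻¹)) /
            (1 - Real.log r + Real.log x) ^ 2) x := by
        exact (hasDerivAt_id x).div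
          ((hasDerivAt_const x (1 - Real.log r)).add (Real.hasDerivAt_log (ne_of_gt hx0)))
          hL0
      have hderiv : deriv (betaROI2 r) x =
          (1 * (1 - Real.log r + Real.log x) - x * (0 + x⁻¹)) /
            (1 - Real.log r + Real.log x) ^ 2 := hd.deriv
      rw [hderiv]
      have hxx : x * (0 + x⁻¹) = 1 := by field_simp; ring
      rw [hxx]
      apply div_pos (by linarith) (by positivity)
end

section
/- The ROI equilibrium strategy β(v) = (N−2)·v^(N−1)/((N−1)·v^(N−2) − r^(N−2)) for N ≥ 3 uniform bidders shades bids between the reserve price and the true value and is strictly increasing: for every v ∈ [r, 1] it holds that r ≤ β(v) ≤ v (so the equilibrium ROI (v − β(v))/β(v) is nonnegative), and β is strictly monotonically increasing on [r, 1]. -/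
lemma roi_key1 (k : ℕ) (hk : 1 ≤ k) (r v : ℝ) (hr : 0 < r) (hrv : r ≤ v) :
    ((k : ℝ) + 1) * r * v ^ k ≤ (k : ℝ) * v ^ (k + 1) + r ^ (k + 1) := by
  induction k, hk using Nat.le_induction with
  | base => norm_num; nlinarith [sq_nonneg (v - r)]
  | succ k hk IH =>
    have hv : 0 < v := lt_of_lt_of_le hr hrv
    have h1 : r ^ (k + 1) ≤ v ^ (k + 1) := pow_le_pow_left₀ hr.le hrv (k + 1)
    have h2 := mul_le_mul_of_nonneg_right IH hv.le
    have h3 : 0 ≤ (v ^ (k + 1) - r ^ (k + 1)) * (v - r) :=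
      mul_nonneg (sub_nonneg.2 h1) (sub_nonneg.2 hrv)
    push_cast
    simp only [pow_succ] at *
    nlinarith [pow_pos hr k, pow_pos hv k]

lemma roi_key2 (k : ℕ) (hk : 1 ≤ k) (r a b : ℝ) (hr : 0 < r) (hra : r ≤ a) (hab : a < b) :
    r ^ k * (b ^ (k + 1) - a ^ (k + 1)) < ((k : ℝ) + 1) * (a ^ k * b ^ k) * (b - a) := by
  have ha : 0 < a := lt_of_lt_of_le hr hra
  have hb : 0 < b := ha.trans hab
  induction k, hk using Nat.le_induction with
  | base =>
    norm_num
    nlinarith [mul_nonneg (mul_nonneg (sub_nonneg.2 hab.le) (sub_nonneg.2 hra)) (add_pos ha hb).le,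
      mul_pos ha (mul_pos (sub_pos.2 hab) (sub_pos.2 hab))]
  | succ k hk IH =>
    have h2 := mul_lt_mul_of_pos_left IH (mul_pos hr hb)
    have h3 : r ^ (k + 1) ≤ b ^ (k + 1) := pow_le_pow_left₀ hr.le (hra.trans hab.le) (k + 1)
    have h4 : 0 ≤ (a - r) * (((k : ℝ) + 1) * (a ^ k * b ^ (k + 1)) * (b - a)) := by
      apply mul_nonneg (sub_nonneg.2 hra)
      apply mul_nonneg (mul_nonneg (by positivity) (by positivity)) (sub_nonneg.2 hab.le)
    have h5 : 0 < a ^ (k + 1) * (b - a) := mul_pos (pow_pos ha _) (sub_pos.2 hab)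
    push_cast
    simp only [pow_succ] at *
    nlinarith [pow_pos ha k, pow_pos hb k, pow_pos hr k]

/-- The ROI equilibrium strategy `β(v) = (N−2)·v^(N−1)/((N−1)·v^(N−2) − r^(N−2))` for
`N ≥ 3` uniform bidders shades bids between the reserve price and the true value and is
strictly increasing: for every `v ∈ [r, 1]`, `r ≤ β(v) ≤ v` (so the equilibrium ROI
`(v − β(v))/β(v)` is nonnegative), and `β` is strictly monotonically increasing on
`[r, 1]`. -/
theorem betaROIN_shading_and_strictMono
    (N : ℕ) (hN : 3 ≤ N) (r : ℝ) (hr0 : 0 < r) (hr1 : r ≤ 1) :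
    (∀ v ∈ Set.Icc r 1,
      r ≤ betaROIN N r v ∧ betaROIN N r v ≤ v ∧
        0 ≤ (v - betaROIN N r v) / betaROIN N r v) ∧
    StrictMonoOn (betaROIN N r) (Set.Icc r 1) := by
  obtain ⟨m, rfl⟩ : ∃ m, N = m + 3 := ⟨N - 3, by omega⟩
  set k := m + 1 with hkdef
  have hk1 : (1 : ℝ) ≤ (k : ℝ) := by exact_mod_cast Nat.one_le_iff_ne_zero.2 (by omega)
  have hbeta : ∀ v : ℝ, betaROIN (m + 3) r v =
      (k : ℝ) * v ^ (k + 1) / (((k : ℝ) + 1) * v ^ k - r ^ k) := by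
    intro v
    have e1 : m + 3 - 1 = k + 1 := rfl
    have e2 : m + 3 - 2 = k := rfl
    rw [betaROIN, e1, e2]
    simp only [hkdef]
    push_cast
    ring
  have hD : ∀ v : ℝ, r ≤ v → 0 < ((k : ℝ) + 1) * v ^ k - r ^ k := by
    intro v hv
    have hv0 : 0 < v := hr0.trans_le hv
    have h1 : r ^ k ≤ v ^ k := pow_le_pow_left₀ hr0.le hv k
    nlinarith [pow_pos hv0 k]
  have hbounds : ∀ v ∈ Set.Icc r 1, r ≤ betaROIN (m + 3) r v ∧ betaROIN (m + 3) r v ≤ v := by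
    rintro v ⟨hv1, hv2⟩
    have hv0 : 0 < v := hr0.trans_le hv1
    have hDv := hD v hv1
    rw [hbeta v]
    constructor
    · rw [le_div_iff₀ hDv]
      have h := roi_key1 k (by omega) r v hr0 hv1
      simp only [pow_succ] at *
      nlinarith
    · rw [div_le_iff₀ hDv]
      have h1 : r ^ k ≤ v ^ k := pow_le_pow_left₀ hr0.le hv1 k
      have h2 : 0 ≤ v * (v ^ k - r ^ k) := mul_nonneg hv0.le (sub_nonneg.2 h1)
      simp only [pow_succ] at *
      nlinarith [pow_pos hv0 k]
  constructor
  · intro v hv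
    obtain ⟨h1, h2⟩ := hbounds v hv
    exact ⟨h1, h2, div_nonneg (sub_nonneg.2 h2) ((hr0.trans_le h1).le)⟩
  · intro a ha b hb hab
    have hDa := hD a ha.1
    have hDb := hD b hb.1
    have ha0 : 0 < a := hr0.trans_le ha.1
    have hb0 : 0 < b := ha0.trans hab
    rw [hbeta a, hbeta b, div_lt_div_iff₀ hDa hDb]
    have key := roi_key2 k (by omega) r a b hr0 ha.1 hab
    have hkpos : (0 : ℝ) < k := by linarith
    simp only [pow_succ] at *
    nlinarith [mul_lt_mul_of_pos_left key hkpos]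
end

section
/- The ROI equilibrium strategy β(v) = v/(1 − log r + log v) for N = 2 uniform bidders satisfies interim incentive compatibility in the first-price auction: for all v, w ∈ [r, 1], w·(v − β(w))/β(w) ≤ v·(v − β(v))/β(v). That is, the interim ROI utility of a bidder with value v who mimics type w (winning with probability w against a single uniform[0,1] opponent bidding according to β and paying β(w)) is maximized at w = v. -/
/-- Interim incentive compatibility of the ROI equilibrium strategy
`β(v) = v/(1 − log r + log v)` for `N = 2` uniform bidders in the first-price auction:
for all `v, w ∈ [r, 1]`, the interim ROI utility `w·(v − β(w))/β(w)` of a bidder with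
value `v` mimicking type `w` (winning with probability `w` against a single uniform
`[0,1]` opponent bidding according to `β`, and paying `β(w)`) is at most the truthful
interim ROI utility `v·(v − β(v))/β(v)`. -/
theorem betaROI2_interim_ic
    (r : ℝ) (hr0 : 0 < r) (hr1 : r ≤ 1) :
    ∀ v ∈ Set.Icc r 1, ∀ w ∈ Set.Icc r 1,
      w * (v - betaROI2 r w) / betaROI2 r w ≤
        v * (v - betaROI2 r v) / betaROI2 r v := by
  intro v hv w hw
  obtain ⟨hrv, hv1⟩ := hv
  obtain ⟨hrw, hw1⟩ := hw
  have hv0 : 0 < v := lt_of_lt_of_le hr0 hrv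
  have hw0 : 0 < w := lt_of_lt_of_le hr0 hrw
  have hlog : ∀ x : ℝ, r ≤ x → 0 < 1 - Real.log r + Real.log x := by
    intro x hx
    have := Real.log_le_log hr0 hx
    linarith
  have hDv := hlog v hrv
  have hDw := hlog w hrw
  have hsimp : ∀ x : ℝ, 0 < x → 0 < 1 - Real.log r + Real.log x →
      x * (v - betaROI2 r x) / betaROI2 r x
        = v * (1 - Real.log r + Real.log x) - x := by
    intro x hx hD
    unfold betaROI2
    field_simp
  rw [hsimp v hv0 hDv, hsimp w hw0 hDw]
  -- reduces to v * log w - w ≤ v * log v - v, i.e. v * log(w/v) ≤ w - v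
  have hkey : Real.log (w / v) ≤ w / v - 1 :=
    Real.log_le_sub_one_of_pos (div_pos hw0 hv0)
  rw [Real.log_div (ne_of_gt hw0) (ne_of_gt hv0)] at hkey
  have h2 := mul_le_mul_of_nonneg_left hkey hv0.le
  have h3 : v * (w / v - 1) = w - v := by field_simp
  nlinarith [h2, h3]
end

section
/- The ROI equilibrium strategy β(v) = (N−2)·v^(N−1)/((N−1)·v^(N−2) − r^(N−2)) for N ≥ 3 uniform bidders satisfies interim incentive compatibility in the first-price auction: for all v, w ∈ [r, 1], w^(N−1)·(v − β(w))/β(w) ≤ v^(N−1)·(v − β(v))/β(v). That is, the interim ROI utility of a bidder with value v who mimics type w (winning with probability w^(N−1) against N−1 uniform[0,1] opponents bidding according to β and paying β(w)) is maximized at w = v. -/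
/-- Weighted AM–GM: `(n+1)·v·wⁿ ≤ v^{n+1} + n·w^{n+1}` for nonnegative `v, w`. -/
lemma amgm_aux (n : ℕ) (v w : ℝ) (hv : 0 ≤ v) (hw : 0 ≤ w) :
    ((n : ℝ) + 1) * v * w ^ n ≤ v ^ (n + 1) + (n : ℝ) * w ^ (n + 1) := by
  induction n with
  | zero => simp
  | succ n ih =>
    have h1 : (0:ℝ) ≤ (v - w) * (v ^ (n + 1) - w ^ (n + 1)) := by
      rcases le_total v w with h | h
      · have := pow_le_pow_left₀ hv h (n + 1)
        nlinarith
      · have := pow_le_pow_left₀ hw h (n + 1)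
        nlinarith
    have h2 := mul_le_mul_of_nonneg_right ih hw
    have e1 : v ^ (n + 1) = v ^ n * v := pow_succ v n
    have e2 : w ^ (n + 1) = w ^ n * w := pow_succ w n
    have e3 : v ^ (n + 1 + 1) = v ^ n * v * v := by rw [pow_succ, e1]
    have e4 : w ^ (n + 1 + 1) = w ^ n * w * w := by rw [pow_succ, e2]
    rw [e1, e2] at h1 h2
    rw [e2, e3, e4]
    push_cast
    nlinarith [h1, h2]

/-- Interim incentive compatibility of the ROI equilibrium strategy
`β(v) = (N−2)·v^(N−1)/((N−1)·v^(N−2) − r^(N−2))` for `N ≥ 3` uniform bidders in the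
first-price auction: for all `v, w ∈ [r, 1]`, the interim ROI utility
`w^(N−1)·(v − β(w))/β(w)` of a bidder with value `v` mimicking type `w` (winning with
probability `w^(N−1)` against `N − 1` i.i.d. uniform `[0,1]` opponents bidding according
to `β`, and paying `β(w)`) is at most the truthful interim ROI utility
`v^(N−1)·(v − β(v))/β(v)`. -/
theorem betaROIN_interim_ic
    (N : ℕ) (hN : 3 ≤ N) (r : ℝ) (hr0 : 0 < r) (hr1 : r ≤ 1) :
    ∀ v ∈ Set.Icc r 1, ∀ w ∈ Set.Icc r 1,
      w ^ (N - 1) * (v - betaROIN N r w) / betaROIN N r w ≤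
        v ^ (N - 1) * (v - betaROIN N r v) / betaROIN N r v := by
  obtain ⟨n, rfl⟩ : ∃ n, N = n + 2 := ⟨N - 2, by omega⟩
  have hn : 1 ≤ n := by omega
  have hn0 : (0:ℝ) < (n : ℝ) := by positivity
  intro v hv w hw
  have hs1 : n + 2 - 1 = n + 1 := by omega
  have hs2 : n + 2 - 2 = n := by omega
  -- key simplification of the interim utility
  have hform : ∀ x : ℝ, r ≤ x → x ≤ 1 →
      x ^ (n + 2 - 1) * (v - betaROIN (n + 2) r x) / betaROIN (n + 2) r x =
        (v * (((n : ℝ) + 1) * x ^ n - r ^ n) - (n : ℝ) * x ^ (n + 1)) / n := by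
    intro x hrx hx1
    have hx0 : 0 < x := lt_of_lt_of_le hr0 hrx
    have hD : r ^ n < ((n : ℝ) + 1) * x ^ n := by
      have h1 : r ^ n ≤ x ^ n := pow_le_pow_left₀ hr0.le hrx n
      have h2 : (0:ℝ) < x ^ n := pow_pos hx0 n
      nlinarith
    have hDne : ((n : ℝ) + 1) * x ^ n - r ^ n ≠ 0 := by linarith
    have hxne : x ^ (n + 1) ≠ 0 := by positivity
    unfold betaROIN
    rw [hs1, hs2]
    push_cast
    have hcast : (n : ℝ) + 2 - 2 = (n : ℝ) := by ring
    have hcast1 : (n : ℝ) + 2 - 1 = (n : ℝ) + 1 := by ring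
    rw [hcast, hcast1]
    rw [div_eq_div_iff]
    · field_simp
    · have : (n : ℝ) * x ^ (n + 1) / (((n : ℝ) + 1) * x ^ n - r ^ n) > 0 := by
        apply div_pos (by positivity) (by linarith)
      exact this.ne'
    · exact hn0.ne'
  rw [hform w hw.1 hw.2, hform v hv.1 hv.2, div_le_div_iff_of_pos_right hn0]
  have hv0 : 0 ≤ v := le_trans hr0.le hv.1
  have hw0 : 0 ≤ w := le_trans hr0.le hw.1
  have := amgm_aux n v w hv0 hw0
  nlinarith [pow_succ v n, pow_succ w n]
end
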